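/- Let A be a finite algebra and α ≺ β, γ ≺ δ prime intervals in Con(A). If (α,β) and (γ,δ) are perspective intervals, then they cannot be separated from each other. -/

import Mathlib

namespace UAlg

structure Sig where
  ι : Type
  arity : ι → ℕ

inductive Term (σ : Sig) (n : ℕ) : Type where
  | var : Fin n → Term σ n
  | app : (i : σ.ι) → (Fin (σ.arity i) → Term σ n) → Term σ n

def Str (σ : Sig) (A : Type) : Type := ∀ i : σ.ι, (Fin (σ.arity i) → A) → A

variable {σ : Sig} {A B : Type}

def Term.eval {n : ℕ} (S : Str σ A) : Term σ n → (Fin n → A) → A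
  | .var j, x => x j
  | .app i ts, x => S i fun k => Term.eval S (ts k) x

/-- A subuniverse: a subset closed under all basic operations. -/
def Subuniv (S : Str σ A) (X : Set A) : Prop :=
  ∀ (i : σ.ι) (x : Fin (σ.arity i) → A), (∀ k, x k ∈ X) → S i x ∈ X

/-- Subalgebra generated by a set. -/
def Sg (S : Str σ A) (X : Set A) : Set A :=
  {a | ∀ Y : Set A, Subuniv S Y → X ⊆ Y → a ∈ Y}

def prodStr (S : Str σ A) (T : Str σ B) : Str σ (A × B) :=
  fun i x => (S i (fun k => (x k).1), T i (fun k => (x k).2))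

structure IsCongruence (S : Str σ A) (r : A → A → Prop) : Prop where
  refl : ∀ a, r a a
  symm : ∀ a b, r a b → r b a
  trans : ∀ a b c, r a b → r b c → r a c
  compat : ∀ (i : σ.ι) (x y : Fin (σ.arity i) → A),
    (∀ k, r (x k) (y k)) → r (S i x) (S i y)

/-- A tolerance: reflexive, symmetric, compatible binary relation. -/
def IsTolerance (S : Str σ A) (r : A → A → Prop) : Prop :=
  (∀ a, r a a) ∧ (∀ a b, r a b → r b a) ∧
    ∀ (i : σ.ι) (x y : Fin (σ.arity i) → A),
      (∀ k, r (x k) (y k)) → r (S i x) (S i y)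

/-- Unary polynomial: a term operation with parameters. -/
def IsUnaryPoly (S : Str σ A) (f : A → A) : Prop :=
  ∃ (n : ℕ) (t : Term σ (n + 1)) (c : Fin n → A),
    f = fun x => t.eval S (Fin.cons x c)

def IsBinPoly (S : Str σ A) (f : A → A → A) : Prop :=
  ∃ (n : ℕ) (t : Term σ (n + 2)) (c : Fin n → A),
    f = fun x y => t.eval S (Fin.cons x (Fin.cons y c))

def IsPolyOp (S : Str σ A) (n : ℕ) (f : (Fin n → A) → A) : Prop :=
  ∃ (m : ℕ) (t : Term σ (n + m)) (c : Fin m → A),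
    f = fun x => t.eval S (Fin.append x c)

def IsTermOp2 (S : Str σ A) (f : A → A → A) : Prop :=
  ∃ t : Term σ 2, f = fun x y => t.eval S (Fin.cons x (Fin.cons y (fun i => i.elim0)))

def IsTermOp3 (S : Str σ A) (f : A → A → A → A) : Prop :=
  ∃ t : Term σ 3,
    f = fun x y z => t.eval S (Fin.cons x (Fin.cons y (Fin.cons z (fun i => i.elim0))))

/-- `f` collapses `β` into `α`. -/
def Collapses (f : A → A) (β α : A → A → Prop) : Prop :=
  ∀ x y, β x y → α (f x) (f y)

def CongLE (r s : A → A → Prop) : Prop := ∀ x y, r x y → s x y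

/-- `β` covers `α` in the congruence lattice. -/
def Prec (S : Str σ A) (α β : A → A → Prop) : Prop :=
  CongLE α β ∧ α ≠ β ∧
    ∀ γ, IsCongruence S γ → CongLE α γ → CongLE γ β → γ = α ∨ γ = β

def MinSetWitness (S : Str σ A) (α β : A → A → Prop) (U : Set A) : Prop :=
  ∃ f, IsUnaryPoly S f ∧ ¬ Collapses f β α ∧ Set.range f = U

/-- An (α,β)-minimal set. -/
def MinSet (S : Str σ A) (α β : A → A → Prop) (U : Set A) : Prop :=
  MinSetWitness S α β U ∧ ∀ V, MinSetWitness S α β V → V ⊆ U → V = U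

/-- Term condition C(θ,β;α) (with polynomials). -/
def TC (S : Str σ A) (θ β α : A → A → Prop) : Prop :=
  ∀ (n : ℕ) (f : (Fin (n + 1) → A) → A), IsPolyOp S (n + 1) f →
    ∀ a b (u v : Fin n → A), θ a b → (∀ i, β (u i) (v i)) →
      (α (f (Fin.cons a u)) (f (Fin.cons a v)) ↔ α (f (Fin.cons b u)) (f (Fin.cons b v)))

/-- Strong term condition. -/
def STC (S : Str σ A) (θ β α : A → A → Prop) : Prop :=
  ∀ (n : ℕ) (f : (Fin (n + 1) → A) → A), IsPolyOp S (n + 1) f →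
    ∀ a b c (u v : Fin n → A), θ a b → θ a c → (∀ i, β (u i) (v i)) →
      α (f (Fin.cons a u)) (f (Fin.cons b v)) → α (f (Fin.cons c u)) (f (Fin.cons c v))

/-- An (α,β)-trace: intersection of a minimal set with a β-block on which β ≠ α. -/
def IsTrace (S : Str σ A) (α β : A → A → Prop) (N : Set A) : Prop :=
  ∃ U, MinSet S α β U ∧ ∃ a ∈ U, N = {x | x ∈ U ∧ β x a} ∧
    ∃ x ∈ N, ∃ y ∈ N, ¬ α x y

def TwoClasses (α : A → A → Prop) (N : Set A) (o e : A) : Prop :=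
  o ∈ N ∧ e ∈ N ∧ ¬ α o e ∧ ∀ x ∈ N, α x o ∨ α x e

def MeetOn (S : Str σ A) (α : A → A → Prop) (N : Set A) (o e : A) : Prop :=
  ∃ p, IsBinPoly S p ∧ (∀ x ∈ N, ∀ y ∈ N, p x y ∈ N) ∧
    ∀ x ∈ N, ∀ y ∈ N,
      (α x e → α y e → α (p x y) e) ∧ ((α x o ∨ α y o) → α (p x y) o)

def JoinOn (S : Str σ A) (α : A → A → Prop) (N : Set A) (o e : A) : Prop :=
  ∃ p, IsBinPoly S p ∧ (∀ x ∈ N, ∀ y ∈ N, p x y ∈ N) ∧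
    ∀ x ∈ N, ∀ y ∈ N,
      ((α x e ∨ α y e) → α (p x y) e) ∧ (α x o → α y o → α (p x y) o)

def NegOn (S : Str σ A) (α : A → A → Prop) (N : Set A) (o e : A) : Prop :=
  ∃ f, IsUnaryPoly S f ∧ (∀ x ∈ N, f x ∈ N) ∧
    ∀ x ∈ N, (α x e → α (f x) o) ∧ (α x o → α (f x) e)

def Typ3 (S : Str σ A) (α β : A → A → Prop) : Prop :=
  ¬ TC S β β α ∧ ∀ N, IsTrace S α β N →
    ∃ o e, TwoClasses α N o e ∧ MeetOn S α N o e ∧ JoinOn S α N o e ∧ NegOn S α N o e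

def Typ4 (S : Str σ A) (α β : A → A → Prop) : Prop :=
  ¬ TC S β β α ∧ (∀ N, IsTrace S α β N →
    ∃ o e, TwoClasses α N o e ∧ MeetOn S α N o e ∧ JoinOn S α N o e) ∧ ¬ Typ3 S α β

def Typ5 (S : Str σ A) (α β : A → A → Prop) : Prop :=
  ¬ TC S β β α ∧ (∀ N, IsTrace S α β N →
    ∃ o e, TwoClasses α N o e ∧ MeetOn S α N o e) ∧ ¬ Typ3 S α β ∧ ¬ Typ4 S α β

/-- Tame-congruence-theoretic type of the prime interval (α,β). -/
def TypIs (S : Str σ A) (α β : A → A → Prop) (k : ℕ) : Prop :=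
  match k with
  | 1 => STC S β β α
  | 2 => TC S β β α ∧ ¬ STC S β β α
  | 3 => Typ3 S α β
  | 4 => Typ4 S α β
  | 5 => Typ5 S α β
  | _ => False

/-- θ centralizes β modulo α (via binary polynomials). -/
def Centralizes (S : Str σ A) (θ β α : A → A → Prop) : Prop :=
  ∀ f, IsBinPoly S f → ∀ a b c d, θ a b → β c d →
    (α (f a c) (f a d) ↔ α (f b c) (f b d))

/-- ζ is the centralizer (α:β): the largest congruence centralizing β modulo α. -/
def IsCentralizer (S : Str σ A) (α β ζ : A → A → Prop) : Prop :=
  IsCongruence S ζ ∧ Centralizes S ζ β α ∧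
    ∀ θ, IsCongruence S θ → Centralizes S θ β α → CongLE θ ζ

/-- The quasi-centralizer relation ζ(α,β). -/
def QuasiCent (S : Str σ A) (α β : A → A → Prop) (a b : A) : Prop :=
  ∀ g, IsBinPoly S g →
    (Collapses (fun y => g a y) β α ↔ Collapses (fun y => g b y) β α)

def SubdirectProd (S : Str σ A) (T : Str σ B) (R : Set (A × B)) : Prop :=
  Subuniv (prodStr S T) R ∧ (∀ a, ∃ b, (a, b) ∈ R) ∧ (∀ b, ∃ a, (a, b) ∈ R)

/-- (f,g) are the coordinate actions of a single unary polynomial of R. -/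
def IsPolyPair (S : Str σ A) (T : Str σ B) (R : Set (A × B)) (f : A → A) (g : B → B) : Prop :=
  ∃ (n : ℕ) (t : Term σ (n + 1)) (c : Fin n → A × B), (∀ k, c k ∈ R) ∧
    (f = fun x => t.eval S (Fin.cons x (fun k => (c k).1))) ∧
    (g = fun y => t.eval T (Fin.cons y (fun k => (c k).2)))

def SeparatesPair (S : Str σ A) (T : Str σ B) (R : Set (A × B))
    (α β : A → A → Prop) (γ δ : B → B → Prop) : Prop :=
  ∃ f g, IsPolyPair S T R f g ∧ ¬ Collapses f β α ∧ Collapses g δ γ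

def SeparatesPairRev (S : Str σ A) (T : Str σ B) (R : Set (A × B))
    (γ δ : B → B → Prop) (α β : A → A → Prop) : Prop :=
  ∃ f g, IsPolyPair S T R f g ∧ ¬ Collapses g δ γ ∧ Collapses f β α

/-- Separation of prime intervals within a single algebra. -/
def SeparatesIn (S : Str σ A) (α β γ δ : A → A → Prop) : Prop :=
  ∃ f, IsUnaryPoly S f ∧ ¬ Collapses f β α ∧ Collapses f δ γ

def tolFst (R : Set (A × B)) : A → A → Prop := fun a b => ∃ c, (a, c) ∈ R ∧ (b, c) ∈ R
def tolSnd (R : Set (A × B)) : B → B → Prop := fun a b => ∃ c, (c, a) ∈ R ∧ (c, b) ∈ R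

/-- Q_ab: the subalgebra of A² generated by the diagonal together with (a,b). -/
def Qab (S : Str σ A) (a b : A) : Set (A × A) :=
  Sg (prodStr S S) ({p : A × A | p.1 = p.2} ∪ {(a, b)})

/-- Principal congruence generated by (a,b). -/
def CgPair (S : Str σ A) (a b : A) : A → A → Prop :=
  fun x y => ∀ r, IsCongruence S r → r a b → r x y

def CongSup (S : Str σ A) (r s : A → A → Prop) : A → A → Prop :=
  fun x y => ∀ t, IsCongruence S t → CongLE r t → CongLE s t → t x y

def RelInf (r s : A → A → Prop) : A → A → Prop := fun x y => r x y ∧ s x y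

def Perspective (S : Str σ A) (α β γ δ : A → A → Prop) : Prop :=
  (β = CongSup S α δ ∧ γ = RelInf α δ) ∨ (δ = CongSup S β γ ∧ α = RelInf β γ)

/-- Thin semilattice edge modulo θ. -/
def ThinSL (S : Str σ A) (θ : A → A → Prop) (a b : A) : Prop :=
  ∃ f, IsTermOp2 S f ∧ θ (f a b) b ∧ θ (f b a) b

/-- Thin majority edge modulo θ. -/
def ThinMajE (S : Str σ A) (θ : A → A → Prop) (a b : A) : Prop :=
  ∃ g, IsTermOp3 S g ∧ θ (g a a b) a ∧ θ (g a b a) a ∧ θ (g b a a) a ∧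
    θ (g a b b) b ∧ θ (g b a b) b ∧ θ (g b b a) b

/-- Thin affine edge modulo θ. -/
def ThinAff (S : Str σ A) (θ : A → A → Prop) (a b : A) : Prop :=
  ∃ h, IsTermOp3 S h ∧ θ (h b a a) b ∧ θ (h a a b) b

def ThinEdge (S : Str σ A) (θ : A → A → Prop) (a b : A) : Prop :=
  ThinSL S θ a b ∨ ThinMajE S θ a b ∨ ThinAff S θ a b

def ThinAS (S : Str σ A) (θ : A → A → Prop) (a b : A) : Prop :=
  ThinSL S θ a b ∨ ThinAff S θ a b

def classOf (r : A → A → Prop) (a : A) : Set A := {x | r x a}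

def IdemStr (S : Str σ A) : Prop := ∀ (i : σ.ι) (a : A), S i (fun _ => a) = a

def OmitsType1 (S : Str σ A) : Prop :=
  ∀ α β : A → A → Prop, IsCongruence S α → IsCongruence S β → Prec S α β →
    ¬ TypIs S α β 1

def ReachASIn (S : Str σ A) (B : Set A) : A → A → Prop :=
  Relation.ReflTransGen (fun x y => x ∈ B ∧ y ∈ B ∧ ThinAS S (· = ·) x y)

/-- D is a maximal strongly connected component of the semilattice+affine digraph on B. -/
def IsASComponent (S : Str σ A) (B D : Set A) : Prop :=
  D.Nonempty ∧ D ⊆ B ∧ (∀ x ∈ D, ∀ y ∈ D, ReachASIn S B x y) ∧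
    ∀ x ∈ D, ∀ y ∈ B, ReachASIn S B x y → y ∈ D

def Reach (S : Str σ A) : A → A → Prop :=
  Relation.ReflTransGen (ThinEdge S (· = ·))

/-- u-maximal element of A. -/
def UMax (S : Str σ A) (a : A) : Prop := ∀ b, Reach S a b → Reach S b a

def ReachIn (S : Str σ A) (B : Set A) : A → A → Prop :=
  Relation.ReflTransGen (fun x y => x ∈ B ∧ y ∈ B ∧ ThinEdge S (· = ·) x y)

/-- u-maximal element of the subalgebra B. -/
def UMaxIn (S : Str σ A) (B : Set A) (b : A) : Prop :=
  b ∈ B ∧ ∀ c ∈ B, ReachIn S B b c → ReachIn S B c b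

def ReachMod (S : Str σ A) (θ : A → A → Prop) : A → A → Prop :=
  Relation.ReflTransGen (fun x y => θ x y ∨ ThinEdge S θ x y)

/-- The θ-block of a is u-maximal in A/θ. -/
def UMaxMod (S : Str σ A) (θ : A → A → Prop) (a : A) : Prop :=
  ∀ b, ReachMod S θ a b → ReachMod S θ b a

def CongOn (S : Str σ A) (B : Set A) (r : A → A → Prop) : Prop :=
  (∀ a ∈ B, r a a) ∧ (∀ a b, r a b → r b a) ∧ (∀ a b c, r a b → r b c → r a c) ∧
    ∀ (i : σ.ι) (x y : Fin (σ.arity i) → A), (∀ k, x k ∈ B) → (∀ k, y k ∈ B) →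
      (∀ k, r (x k) (y k)) → r (S i x) (S i y)

def MaximalCongOn (S : Str σ A) (B : Set A) (r : A → A → Prop) : Prop :=
  CongOn S B r ∧ (∃ a ∈ B, ∃ b ∈ B, ¬ r a b) ∧
    ∀ r', CongOn S B r' → (∀ x y, x ∈ B → y ∈ B → r x y → r' x y) →
      ((∀ x y, x ∈ B → y ∈ B → (r' x y ↔ r x y)) ∨ ∀ x ∈ B, ∀ y ∈ B, r' x y)

/-- Semilattice edge (thick). -/
def SLEdge (S : Str σ A) (a b : A) : Prop :=
  ∃ θ, MaximalCongOn S (Sg S {a, b}) θ ∧ ¬ θ a b ∧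
    ∃ f, IsTermOp2 S f ∧ θ (f a b) b ∧ θ (f b a) b ∧ θ (f a a) a ∧ θ (f b b) b

/-- Majority edge (thick). -/
def MajEdge (S : Str σ A) (a b : A) : Prop :=
  ∃ θ, MaximalCongOn S (Sg S {a, b}) θ ∧ ¬ θ a b ∧
    ∃ g, IsTermOp3 S g ∧ θ (g a a b) a ∧ θ (g a b a) a ∧ θ (g b a a) a ∧
      θ (g a b b) b ∧ θ (g b a b) b ∧ θ (g b b a) b

def famStr {n : ℕ} {𝔸 : Fin n → Type} (S : ∀ i, Str σ (𝔸 i)) : Str σ (∀ i, 𝔸 i) :=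
  fun op x i => S i op (fun k => x k i)

def SubdirectFam {n : ℕ} {𝔸 : Fin n → Type} (S : ∀ i, Str σ (𝔸 i))
    (R : Set (∀ i, 𝔸 i)) : Prop :=
  Subuniv (famStr S) R ∧ ∀ (i : Fin n) (a : 𝔸 i), ∃ r ∈ R, r i = a

/-- f is the family of coordinate actions of a single unary polynomial of R. -/
def IsPolyFam {n : ℕ} {𝔸 : Fin n → Type} (S : ∀ i, Str σ (𝔸 i)) (R : Set (∀ i, 𝔸 i))
    (f : ∀ i, 𝔸 i → 𝔸 i) : Prop :=
  ∃ (m : ℕ) (t : Term σ (m + 1)) (c : Fin m → ∀ i, 𝔸 i), (∀ k, c k ∈ R) ∧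
    ∀ i, f i = fun x => t.eval (S i) (Fin.cons x (fun k => c k i))

/-- (α_i,β_i) can be separated from (α_j,β_j) by a unary polynomial of R. -/
def SeparatesFam {n : ℕ} {𝔸 : Fin n → Type} (S : ∀ i, Str σ (𝔸 i)) (R : Set (∀ i, 𝔸 i))
    (i j : Fin n) (αi βi : 𝔸 i → 𝔸 i → Prop) (αj βj : 𝔸 j → 𝔸 j → Prop) : Prop :=
  ∃ f, IsPolyFam S R f ∧ ¬ Collapses (f i) βi αi ∧ Collapses (f j) βj αj

end UAlg

namespace UAlg

variable {σ : Sig} {A : Type}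

theorem term_eval_compat {S : Str σ A} {θ : A → A → Prop} (h : IsCongruence S θ)
    {n : ℕ} (t : Term σ n) {x y : Fin n → A} (hxy : ∀ k, θ (x k) (y k)) :
    θ (t.eval S x) (t.eval S y) := by
  induction t with
  | var j => exact hxy j
  | app i ts ih => exact h.compat i _ _ fun k => ih k

theorem poly_preserves {S : Str σ A} {θ : A → A → Prop} (h : IsCongruence S θ)
    {f : A → A} (hf : IsUnaryPoly S f) {x y : A} (hxy : θ x y) : θ (f x) (f y) := by
  obtain ⟨n, t, c, rfl⟩ := hf
  refine term_eval_compat h t (fun k => ?_)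
  refine Fin.cases ?_ ?_ k
  · simpa using hxy
  · intro j; simpa using h.refl (c j)

/-- Reflexive-transitive closure of the union of two relations. -/
def JoinCl (r s : A → A → Prop) : A → A → Prop :=
  Relation.ReflTransGen (fun a b => r a b ∨ s a b)

theorem joincl_compat_single {S : Str σ A} {r s : A → A → Prop}
    (hr : IsCongruence S r) (hs : IsCongruence S s)
    (i : σ.ι) (x : Fin (σ.arity i) → A) (k : Fin (σ.arity i)) {a b : A}
    (hab : JoinCl r s a b) :
    JoinCl r s (S i (Function.update x k a)) (S i (Function.update x k b)) := by
  refine Relation.ReflTransGen.lift (fun z => S i (Function.update x k z)) ?_ _ _ hab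
  intro a b hab
  rcases hab with h | h
  · refine Or.inl (hr.compat i _ _ fun j => ?_)
    rcases eq_or_ne j k with rfl | hj
    · simpa using h
    · simp only [Function.update_of_ne hj]; exact hr.refl _
  · refine Or.inr (hs.compat i _ _ fun j => ?_)
    rcases eq_or_ne j k with rfl | hj
    · simpa using h
    · simp only [Function.update_of_ne hj]; exact hs.refl _

theorem joincl_compat {S : Str σ A} {r s : A → A → Prop}
    (hr : IsCongruence S r) (hs : IsCongruence S s)
    (i : σ.ι) (x y : Fin (σ.arity i) → A)
    (h : ∀ k, JoinCl r s (x k) (y k)) :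
    JoinCl r s (S i x) (S i y) := by
  classical
  have key : ∀ T : Finset (Fin (σ.arity i)),
      JoinCl r s (S i x) (S i (fun j => if j ∈ T then y j else x j)) := by
    intro T
    induction T using Finset.induction_on with
    | empty =>
      simp only [Finset.notMem_empty, if_false]
      exact Relation.ReflTransGen.refl
    | @insert k T hk ih =>
      refine ih.trans ?_
      have h1 : (fun j => if j ∈ insert k T then y j else x j)
          = Function.update (fun j => if j ∈ T then y j else x j) k (y k) := by
        funext j
        rcases eq_or_ne j k with rfl | hj
        · simp
        · simp [Function.update_of_ne hj, hj]
      have h2 : (fun j => if j ∈ T then y j else x j)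
          = Function.update (fun j => if j ∈ T then y j else x j) k (x k) := by
        funext j
        rcases eq_or_ne j k with rfl | hj
        · simp [hk]
        · simp [Function.update_of_ne hj]
      have hstep := joincl_compat_single hr hs i
        (fun j => if j ∈ T then y j else x j) k (h k)
      rw [← h2, ← h1] at hstep
      exact hstep
  have := key Finset.univ
  simpa using this

theorem joincl_congruence {S : Str σ A} {r s : A → A → Prop}
    (hr : IsCongruence S r) (hs : IsCongruence S s) :
    IsCongruence S (JoinCl r s) := by
  refine ⟨fun a => Relation.ReflTransGen.refl, ?_, fun a b c h1 h2 => h1.trans h2,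
    joincl_compat hr hs⟩
  intro a b h
  have hsymm : Symmetric (fun a b => r a b ∨ s a b) := by
    intro a b hab
    rcases hab with h' | h'
    · exact Or.inl (hr.symm _ _ h')
    · exact Or.inr (hs.symm _ _ h')
  exact (haveI : Std.Symm (fun a b => r a b ∨ s a b) := ⟨hsymm⟩; Relation.ReflTransGen.symmetric).symm _ _ h

theorem congSup_le_joincl {S : Str σ A} {r s : A → A → Prop}
    (hr : IsCongruence S r) (hs : IsCongruence S s) {x y : A}
    (h : CongSup S r s x y) : JoinCl r s x y :=
  h _ (joincl_congruence hr hs)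
    (fun _ _ hab => Relation.ReflTransGen.single (Or.inl hab))
    (fun _ _ hab => Relation.ReflTransGen.single (Or.inr hab))

end UAlg


open UAlg

/-- perspective prime intervals cannot be separated from each other. -/
theorem stmt6 {σ : Sig} {A : Type} [Finite A] (S : Str σ A)
    (α β γ δ : A → A → Prop)
    (hα : IsCongruence S α) (hβ : IsCongruence S β)
    (hγ : IsCongruence S γ) (hδ : IsCongruence S δ)
    (hab : Prec S α β) (hgd : Prec S γ δ)
    (hpersp : Perspective S α β γ δ) :
    ¬ SeparatesIn S α β γ δ ∧ ¬ SeparatesIn S γ δ α β := by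
  constructor
  · rintro ⟨f, hf, hnc, hc⟩
    apply hnc
    intro x y hxy
    rcases hpersp with ⟨hβ', hγ'⟩ | ⟨hδ', hα'⟩
    · -- β = α ∨ δ, γ = α ∧ δ
      have hchain : JoinCl α δ x y := congSup_le_joincl hα hδ (hβ' ▸ hxy)
      clear hxy
      induction hchain with
      | refl => exact hα.refl _
      | tail _ hstep ih =>
        refine hα.trans _ _ _ ih ?_
        rcases hstep with h | h
        · exact poly_preserves hα hf h
        · have := hc _ _ h
          rw [hγ'] at this
          exact this.1
    · -- δ = β ∨ γ, α = β ∧ γ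
      rw [hα']
      refine ⟨poly_preserves hβ hf hxy, ?_⟩
      refine hc _ _ ?_
      rw [hδ']
      intro t ht h1 h2
      exact h1 _ _ hxy
  · rintro ⟨f, hf, hnc, hc⟩
    apply hnc
    intro x y hxy
    rcases hpersp with ⟨hβ', hγ'⟩ | ⟨hδ', hα'⟩
    · -- β = α ∨ δ, γ = α ∧ δ
      rw [hγ']
      refine ⟨?_, poly_preserves hδ hf hxy⟩
      refine hc _ _ ?_
      rw [hβ']
      intro t ht h1 h2
      exact h2 _ _ hxy
    · -- δ = β ∨ γ, α = β ∧ γ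
      have hchain : JoinCl β γ x y := congSup_le_joincl hβ hγ (hδ' ▸ hxy)
      clear hxy
      induction hchain with
      | refl => exact hγ.refl _
      | tail _ hstep ih =>
        refine hγ.trans _ _ _ ih ?_
        rcases hstep with h | h
        · have := hc _ _ h
          rw [hα'] at this
          exact this.2
        · exact poly_preserves hγ hf h
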